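/- Let F : ℝ × ℝⁿ → ℝⁿ be continuous, and suppose that for every compact interval I ⊆ ℝ, the restriction of F to I × ℝⁿ is Lipschitz in the second variable, uniformly in the first. Then for every initial condition (t₀, x₀, x₁) ∈ ℝ × ℝⁿ × ℝⁿ, the second-order ODE x''(t) = F(t, x(t)) with x(t₀) = x₀, x'(t₀) = x₁ has a (unique) solution defined on all of ℝ. -/

import Mathlib

section ODEAux
open Set Metric Real NNReal

variable {E : Type*} [NormedAddCommGroup E] [NormedSpace ℝ E] [CompleteSpace E]

lemma ode_unique (G : ℝ → E → E)
    (hL : ∀ a b : ℝ, ∃ K : ℝ≥0, ∀ t ∈ Set.Icc a b, LipschitzWith K (G t))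
    {y z : ℝ → E} (hy : ∀ t, HasDerivAt y (G t (y t)) t)
    (hz : ∀ t, HasDerivAt z (G t (z t)) t) {t₀ : ℝ} (h0 : y t₀ = z t₀) : y = z := by
  funext t
  set a := min t₀ t - 1 with ha
  set b := max t₀ t + 1 with hb
  obtain ⟨K, hK⟩ := hL a b
  set s : ℝ → Set E := fun r => if r ∈ Set.Icc a b then (Set.univ : Set E) else ∅ with hs
  have hv : ∀ r, LipschitzOnWith K (G r) (s r) := by
    intro r
    by_cases h : r ∈ Set.Icc a b
    · simpa [hs, h] using (hK r h).lipschitzOnWith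
    · rw [hs]; simp only [if_neg h]; exact lipschitzOnWith_empty _ _
  have hmem : ∀ (w : ℝ → E), ∀ r ∈ Set.Ioo a b, w r ∈ s r := by
    intro w r hr
    have : r ∈ Set.Icc a b := ⟨hr.1.le, hr.2.le⟩
    simp [hs, if_pos this, Set.mem_Icc.1 this]
  have ht₀ : t₀ ∈ Set.Ioo a b := ⟨by simp only [ha]; linarith [min_le_left t₀ t], by simp only [hb]; linarith [le_max_left t₀ t]⟩
  have htm : t ∈ Set.Icc a b := ⟨by simp only [ha]; linarith [min_le_right t₀ t], by simp only [hb]; linarith [le_max_right t₀ t]⟩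
  exact ODE_solution_unique_of_mem_Icc (fun r _ => hv r) ht₀
    (Continuous.continuousOn (continuous_iff_continuousAt.2 fun r => (hy r).continuousAt))
    (fun r _ => hy r) (hmem y)
    (Continuous.continuousOn (continuous_iff_continuousAt.2 fun r => (hz r).continuousAt))
    (fun r _ => hz r) (hmem z) h0 htm

lemma ode_local (G : ℝ → E → E) (hG : Continuous fun p : ℝ × E => G p.1 p.2)
    {a b : ℝ} {K : ℝ≥0} (hK : ∀ t ∈ Set.Icc a b, LipschitzWith K (G t))
    {s₀ : ℝ} (hs₀ : s₀ ∈ Set.Icc a b) (y₀ : E) :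
    ∃ y : ℝ → E, y s₀ = y₀ ∧
      ∀ t ∈ Set.Icc (max a (s₀ - (2 * ((K : ℝ) + 1))⁻¹)) (min b (s₀ + (2 * ((K : ℝ) + 1))⁻¹)),
        HasDerivWithinAt y (G t (y t))
          (Set.Icc (max a (s₀ - (2 * ((K : ℝ) + 1))⁻¹)) (min b (s₀ + (2 * ((K : ℝ) + 1))⁻¹))) t := by
  set ε : ℝ := (2 * ((K : ℝ) + 1))⁻¹ with hε
  have hε0 : 0 < ε := by positivity
  have hcy : ContinuousOn (fun t => G t y₀) (Set.Icc a b) :=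
    (hG.comp (continuous_id.prodMk continuous_const)).continuousOn
  obtain ⟨M0, hM0⟩ := isCompact_Icc.exists_bound_of_continuousOn hcy
  set M := max M0 0 with hMdef
  have hM : ∀ t ∈ Set.Icc a b, ‖G t y₀‖ ≤ M := fun t ht => (hM0 t ht).trans (le_max_left _ _)
  have hM0' : (0:ℝ) ≤ M := le_max_right _ _
  set tMin := max a (s₀ - ε) with htMin
  set tMax := min b (s₀ + ε) with htMax
  set R := 2 * (M + 1) * ε with hR
  set C := M + (K : ℝ) * R with hC
  have hR0 : (0:ℝ) ≤ R := by positivity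
  have hsub : Set.Icc tMin tMax ⊆ Set.Icc a b :=
    Set.Icc_subset_Icc (le_max_left _ _) (min_le_left _ _)
  have hKε : (K : ℝ) * ε ≤ 1 / 2 := by
    rw [hε, show (2 * ((K:ℝ) + 1))⁻¹ = 1 / (2 * ((K:ℝ)+1)) by ring, mul_one_div,
      div_le_div_iff₀ (by positivity) (by norm_num)]
    push_cast
    nlinarith [K.coe_nonneg]
  have hC0 : (0:ℝ) ≤ C := by rw [hC]; positivity
  have hpl : IsPicardLindelof G (tmin := tMin) (tmax := tMax)
      ⟨s₀, max_le hs₀.1 (by linarith), le_min hs₀.2 (by linarith)⟩ y₀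
      (Real.toNNReal R) 0 (Real.toNNReal C) K :=
    { lipschitzOnWith := fun t ht => (hK t (hsub ht)).lipschitzOnWith
      continuousOn := fun x _ =>
        ((hG.comp (continuous_id.prodMk continuous_const)).continuousOn :
          ContinuousOn (fun t => G t x) (Set.Icc tMin tMax))
      norm_le := by
        intro t ht x hx
        rw [Real.coe_toNNReal _ hC0]
        rw [Real.coe_toNNReal _ hR0] at hx
        have h1 : dist (G t x) (G t y₀) ≤ (K : ℝ) * dist x y₀ :=
          (hK t (hsub ht)).dist_le_mul x y₀
        have h2 : dist x y₀ ≤ R := mem_closedBall.1 hx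
        have h3 := norm_sub_norm_le (G t x) (G t y₀)
        rw [dist_eq_norm, dist_eq_norm] at h1
        rw [dist_eq_norm] at h2
        have h4 := hM t (hsub ht)
        have h5 : (K:ℝ) * ‖x - y₀‖ ≤ (K:ℝ) * R :=
          mul_le_mul_of_nonneg_left h2 K.coe_nonneg
        rw [hC]; linarith
      mul_max_le := by
        rw [Real.coe_toNNReal _ hC0, Real.coe_toNNReal _ hR0, NNReal.coe_zero, sub_zero]
        have h1 : max (tMax - s₀) (s₀ - tMin) ≤ ε :=
          max_le (by rw [htMax]; linarith [min_le_right b (s₀ + ε)])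
            (by rw [htMin]; linarith [le_max_right a (s₀ - ε)])
        calc C * max (tMax - s₀) (s₀ - tMin) ≤ C * ε := by
              exact mul_le_mul_of_nonneg_left h1 hC0
          _ ≤ R := by
              rw [hC, hR]
              nlinarith [hKε, hε0.le, hM0', hR0] }
  obtain ⟨y, hy0, hy⟩ := hpl.exists_eq_forall_mem_Icc_hasDerivWithinAt₀
  exact ⟨y, hy0, hy⟩

omit [CompleteSpace E] in
lemma ode_glue (G : ℝ → E → E) {a m b : ℝ} (ham : a ≤ m) (hmb : m ≤ b)
    {y z : ℝ → E}
    (hy : ∀ t ∈ Set.Icc a m, HasDerivWithinAt y (G t (y t)) (Set.Icc a m) t)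
    (hz : ∀ t ∈ Set.Icc m b, HasDerivWithinAt z (G t (z t)) (Set.Icc m b) t)
    (hmatch : y m = z m) :
    ∃ w : ℝ → E, (∀ t ∈ Set.Icc a m, w t = y t) ∧ (∀ t ∈ Set.Icc m b, w t = z t) ∧
      ∀ t ∈ Set.Icc a b, HasDerivWithinAt w (G t (w t)) (Set.Icc a b) t := by
  classical
  set w : ℝ → E := fun t => if t ≤ m then y t else z t with hw
  have hwy : ∀ t ∈ Set.Icc a m, w t = y t := fun t ht => if_pos ht.2
  have hwz : ∀ t ∈ Set.Icc m b, w t = z t := by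
    intro t ht
    rcases lt_or_eq_of_le ht.1 with h | h
    · exact if_neg (not_le.2 h)
    · rw [hw]; simp only [← h, le_refl, if_pos, hmatch]
  refine ⟨w, hwy, hwz, ?_⟩
  intro t ht
  have hIcc : Set.Icc a m ∪ Set.Icc m b = Set.Icc a b := Set.Icc_union_Icc_eq_Icc ham hmb
  rcases lt_trichotomy t m with h | h | h
  · -- t < m
    have htm : t ∈ Set.Icc a m := ⟨ht.1, h.le⟩
    have h1 : HasDerivWithinAt w (G t (w t)) (Set.Icc a m) t :=
      ((hy t htm).congr hwy (hwy t htm)).congr_deriv (by rw [hwy t htm])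
    have h2 : Set.Icc a m ∈ nhdsWithin t (Set.Icc a b) := by
      have : Set.Icc a b ∩ Set.Iic m ∈ nhdsWithin t (Set.Icc a b) :=
        inter_mem_nhdsWithin _ (Iic_mem_nhds h)
      have heq : Set.Icc a b ∩ Set.Iic m = Set.Icc a m := by
        ext r
        simp only [Set.mem_inter_iff, Set.mem_Icc, Set.mem_Iic]
        exact ⟨fun h' => ⟨h'.1.1, h'.2⟩, fun h' => ⟨⟨h'.1, h'.2.trans hmb⟩, h'.2⟩⟩
      rwa [heq] at this
    exact h1.mono_of_mem_nhdsWithin h2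
  · -- t = m
    subst h
    have h1 : HasDerivWithinAt w (G t (w t)) (Set.Icc a t) t :=
      ((hy t ⟨ht.1, le_rfl⟩).congr hwy (hwy t ⟨ht.1, le_rfl⟩)).congr_deriv
        (by rw [hwy t ⟨ht.1, le_rfl⟩])
    have h2 : HasDerivWithinAt w (G t (w t)) (Set.Icc t b) t :=
      ((hz t ⟨le_rfl, ht.2⟩).congr hwz (hwz t ⟨le_rfl, ht.2⟩)).congr_deriv
        (by rw [hwz t ⟨le_rfl, ht.2⟩])
    have := h1.union h2
    rwa [Set.Icc_union_Icc_eq_Icc ht.1 ht.2] at this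
  · -- m < t
    have htm : t ∈ Set.Icc m b := ⟨h.le, ht.2⟩
    have h1 : HasDerivWithinAt w (G t (w t)) (Set.Icc m b) t :=
      ((hz t htm).congr hwz (hwz t htm)).congr_deriv (by rw [hwz t htm])
    have h2 : Set.Icc m b ∈ nhdsWithin t (Set.Icc a b) := by
      have : Set.Icc a b ∩ Set.Ici m ∈ nhdsWithin t (Set.Icc a b) :=
        inter_mem_nhdsWithin _ (Ici_mem_nhds h)
      have heq : Set.Icc a b ∩ Set.Ici m = Set.Icc m b := by
        ext r
        simp only [Set.mem_inter_iff, Set.mem_Icc, Set.mem_Ici]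
        exact ⟨fun h' => ⟨h'.2, h'.1.2⟩, fun h' => ⟨⟨ham.trans h'.1, h'.2⟩, h'.1⟩⟩
      rwa [heq] at this
    exact h1.mono_of_mem_nhdsWithin h2

lemma ode_forward (G : ℝ → E → E) (hG : Continuous fun p : ℝ × E => G p.1 p.2)
    (hL : ∀ a b : ℝ, ∃ K : ℝ≥0, ∀ t ∈ Set.Icc a b, LipschitzWith K (G t))
    {t₀ b : ℝ} (htb : t₀ ≤ b) (y₀ : E) :
    ∃ y : ℝ → E, y t₀ = y₀ ∧ ∀ t ∈ Set.Icc t₀ b,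
      HasDerivWithinAt y (G t (y t)) (Set.Icc t₀ b) t := by
  obtain ⟨K, hK⟩ := hL t₀ b
  set ε : ℝ := (2 * ((K : ℝ) + 1))⁻¹ with hε
  have hε0 : 0 < ε := by positivity
  -- induction: solution up to min b (t₀ + k • ε)
  have key : ∀ k : ℕ, ∃ y : ℝ → E, y t₀ = y₀ ∧ ∀ t ∈ Set.Icc t₀ (min b (t₀ + k * ε)),
      HasDerivWithinAt y (G t (y t)) (Set.Icc t₀ (min b (t₀ + k * ε))) t := by
    intro k
    induction k with
    | zero =>
      refine ⟨fun _ => y₀, rfl, ?_⟩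
      intro t ht
      simp only [Nat.cast_zero, zero_mul, add_zero] at ht ⊢
      have hmin : min b t₀ = t₀ := min_eq_right htb
      rw [hmin] at ht ⊢
      have htt : t = t₀ := le_antisymm ht.2 ht.1
      subst htt
      rw [Set.Icc_self]
      rw [hasDerivWithinAt_iff_hasFDerivWithinAt]
      refine .of_not_accPt ?_; rw [accPt_iff_clusterPt, Filter.inf_principal]; simp [ClusterPt]
    | succ k ih =>
      obtain ⟨y, hy0, hy⟩ := ih
      set m := min b (t₀ + k * ε) with hm
      set m' := min b (t₀ + (k + 1 : ℕ) * ε) with hm'def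
      have hkε : (0:ℝ) ≤ k * ε := by positivity
      have htm : t₀ ≤ m := le_min htb (by linarith)
      by_cases hcase : b ≤ t₀ + k * ε
      · have h1 : m = b := min_eq_left hcase
        have h2 : m' = b := min_eq_left (by push_cast; nlinarith [hε0.le])
        refine ⟨y, hy0, ?_⟩
        rw [h2, ← h1]
        exact hy
      · push_neg at hcase
        have h1 : m = t₀ + k * ε := min_eq_right hcase.le
        have hmab : m ∈ Set.Icc t₀ b := ⟨htm, min_le_left _ _⟩
        obtain ⟨z, hz0, hz⟩ := ode_local G hG hK hmab (y m)
        have hm2 : m' = min b (m + ε) := by rw [hm'def, h1]; push_cast; ring_nf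
        have hmm' : m ≤ m' := by
          rw [hm2]; exact le_min (min_le_left _ _) (by linarith)
        have hsub2 : Set.Icc m m' ⊆ Set.Icc (max t₀ (m - ε)) (min b (m + ε)) :=
          Set.Icc_subset_Icc (max_le htm (by linarith)) hm2.le
        have hz' : ∀ t ∈ Set.Icc m m', HasDerivWithinAt z (G t (z t)) (Set.Icc m m') t :=
          fun t ht => (hz t (hsub2 ht)).mono hsub2
        obtain ⟨w, hw1, hw2, hw3⟩ := ode_glue G htm hmm' hy hz' hz0.symm
        exact ⟨w, by rw [hw1 t₀ ⟨le_rfl, htm⟩, hy0], hw3⟩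
  obtain ⟨k, hk⟩ := exists_nat_ge ((b - t₀) / ε)
  obtain ⟨y, hy0, hy⟩ := key k
  have : min b (t₀ + k * ε) = b := by
    rw [min_eq_left]
    rw [div_le_iff₀ hε0] at hk
    linarith
  rw [this] at hy
  exact ⟨y, hy0, hy⟩

lemma ode_interval (G : ℝ → E → E) (hG : Continuous fun p : ℝ × E => G p.1 p.2)
    (hL : ∀ a b : ℝ, ∃ K : ℝ≥0, ∀ t ∈ Set.Icc a b, LipschitzWith K (G t))
    {t₀ a b : ℝ} (hat : a ≤ t₀) (htb : t₀ ≤ b) (y₀ : E) :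
    ∃ y : ℝ → E, y t₀ = y₀ ∧ ∀ t ∈ Set.Icc a b,
      HasDerivWithinAt y (G t (y t)) (Set.Icc a b) t := by
  -- forward part
  obtain ⟨yf, hyf0, hyf⟩ := ode_forward G hG hL htb y₀
  -- backward part via time reversal
  set Gr : ℝ → E → E := fun s x => -(G (2 * t₀ - s) x) with hGr
  have hGrc : Continuous fun p : ℝ × E => Gr p.1 p.2 :=
    (hG.comp (((continuous_const.sub continuous_fst)).prodMk continuous_snd)).neg
  have hGrL : ∀ c d : ℝ, ∃ K : ℝ≥0, ∀ s ∈ Set.Icc c d, LipschitzWith K (Gr s) := by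
    intro c d
    obtain ⟨K, hK⟩ := hL (2 * t₀ - d) (2 * t₀ - c)
    refine ⟨K, fun s hs => ?_⟩
    have hmem : 2 * t₀ - s ∈ Set.Icc (2 * t₀ - d) (2 * t₀ - c) :=
      ⟨by linarith [hs.2], by linarith [hs.1]⟩
    have h1 : LipschitzWith 1 (fun x : E => -x) := LipschitzWith.id.neg
    have := h1.comp (hK _ hmem)
    rwa [one_mul] at this
  have hta : t₀ ≤ 2 * t₀ - a := by linarith
  obtain ⟨yr, hyr0, hyr⟩ := ode_forward Gr hGrc hGrL hta y₀
  set yb : ℝ → E := fun t => yr (2 * t₀ - t) with hyb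
  have hybd : ∀ t ∈ Set.Icc a t₀, HasDerivWithinAt yb (G t (yb t)) (Set.Icc a t₀) t := by
    intro t ht
    have hmaps : Set.MapsTo (fun s : ℝ => 2 * t₀ - s) (Set.Icc a t₀) (Set.Icc t₀ (2 * t₀ - a)) := by
      intro s hs
      simp only [Set.mem_Icc] at hs ⊢
      constructor <;> linarith [hs.1, hs.2]
    have hh : HasDerivWithinAt (fun s : ℝ => 2 * t₀ - s) (-1) (Set.Icc a t₀) t :=
      ((hasDerivAt_id t).const_sub (2 * t₀)).hasDerivWithinAt
    have hg : HasDerivWithinAt yr (Gr (2 * t₀ - t) (yr (2 * t₀ - t)))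
        (Set.Icc t₀ (2 * t₀ - a)) (2 * t₀ - t) :=
      hyr _ (hmaps ht)
    have := hg.scomp_of_eq t hh hmaps rfl
    have heq : ((-1 : ℝ) • Gr (2 * t₀ - t) (yr (2 * t₀ - t))) = G t (yb t) := by
      rw [hGr]
      simp only [neg_smul, one_smul, neg_neg]
      norm_num
      rfl
    rw [heq] at this
    exact this
  obtain ⟨w, hw1, hw2, hw3⟩ := ode_glue G hat htb hybd hyf (by
    show yb t₀ = yf t₀
    rw [hyb, hyf0]
    show yr (2 * t₀ - t₀) = y₀
    rw [show 2 * t₀ - t₀ = t₀ by ring]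
    exact hyr0)
  refine ⟨w, ?_, hw3⟩
  rw [hw1 t₀ ⟨hat, le_rfl⟩, hyb]
  show yr (2 * t₀ - t₀) = y₀
  rw [show 2 * t₀ - t₀ = t₀ by ring]
  exact hyr0

lemma ode_global (G : ℝ → E → E) (hG : Continuous fun p : ℝ × E => G p.1 p.2)
    (hL : ∀ a b : ℝ, ∃ K : ℝ≥0, ∀ t ∈ Set.Icc a b, LipschitzWith K (G t))
    (t₀ : ℝ) (y₀ : E) :
    ∃ y : ℝ → E, y t₀ = y₀ ∧ ∀ t, HasDerivAt y (G t (y t)) t := by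
  have hex : ∀ m : ℕ, ∃ y : ℝ → E, y t₀ = y₀ ∧
      ∀ t ∈ Set.Icc (t₀ - (m + 1)) (t₀ + (m + 1)),
        HasDerivWithinAt y (G t (y t)) (Set.Icc (t₀ - (m + 1)) (t₀ + (m + 1))) t := by
    intro m
    have h1 : (0:ℝ) ≤ m + 1 := by positivity
    exact ode_interval G hG hL (by linarith) (by linarith) y₀
  choose Y hY0 hY using hex
  have hIoo : ∀ m : ℕ, t₀ ∈ Set.Ioo (t₀ - ((m:ℝ) + 1)) (t₀ + (m + 1)) := by
    intro m
    have h1 : (0:ℝ) < m + 1 := by positivity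
    exact ⟨by linarith, by linarith⟩
  have hcons : ∀ m m' : ℕ, m ≤ m' →
      Set.EqOn (Y m) (Y m') (Set.Icc (t₀ - (m + 1)) (t₀ + (m + 1))) := by
    intro m m' hmm
    have hmr : (m:ℝ) + 1 ≤ (m':ℝ) + 1 := by exact_mod_cast by omega
    set c := t₀ - ((m:ℝ) + 1) with hc
    set d := t₀ + ((m:ℝ) + 1) with hd
    obtain ⟨K, hK⟩ := hL c d
    set s : ℝ → Set E := fun r => if r ∈ Set.Icc c d then (Set.univ : Set E) else ∅ with hs
    have hv : ∀ r, LipschitzOnWith K (G r) (s r) := by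
      intro r
      by_cases h : r ∈ Set.Icc c d
      · simpa [hs, h] using (hK r h).lipschitzOnWith
      · rw [hs]; simp only [if_neg h]; exact lipschitzOnWith_empty _ _
    have hmem : ∀ (w : ℝ → E), ∀ r ∈ Set.Ioo c d, w r ∈ s r := by
      intro w r hr
      have : r ∈ Set.Icc c d := ⟨hr.1.le, hr.2.le⟩
      simp [hs, if_pos this, Set.mem_Icc.1 this]
    apply ODE_solution_unique_of_mem_Icc (fun r _ => hv r) (hIoo m)
    · exact fun r hr => (hY m r hr).continuousWithinAt
    · intro r hr
      exact (hY m r (Set.Ioo_subset_Icc_self hr)).hasDerivAt (Icc_mem_nhds hr.1 hr.2)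
    · exact hmem _
    · intro r hr
      exact ContinuousWithinAt.mono ((hY m' r ⟨by linarith [hr.1], by linarith [hr.2]⟩).continuousWithinAt)
        (Set.Icc_subset_Icc (by linarith) (by linarith))
    · intro r hr
      exact (hY m' r ⟨by linarith [hr.1.le], by linarith [hr.2.le]⟩).hasDerivAt
        (Icc_mem_nhds (by linarith [hr.1]) (by linarith [hr.2]))
    · exact hmem _
    · rw [hY0 m, hY0 m']
  set N : ℝ → ℕ := fun t => ⌈|t - t₀|⌉₊ with hN
  refine ⟨fun t => Y (N t) t, by simp [hN, hY0], ?_⟩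
  intro t
  set m := N t with hm
  have htm : |t - t₀| < (m:ℝ) + 1 := (Nat.le_ceil _).trans_lt (by exact_mod_cast lt_add_one (m:ℝ))
  have htIoo : t ∈ Set.Ioo (t₀ - ((m:ℝ) + 1)) (t₀ + ((m:ℝ) + 1)) := by
    rw [Set.mem_Ioo]
    have := abs_lt.1 htm
    constructor <;> linarith [this.1, this.2]
  have hU : ∀ s ∈ Set.Ioo (t₀ - ((m:ℝ) + 1)) (t₀ + ((m:ℝ) + 1)), Y (N s) s = Y m s := by
    intro s hs
    have hsm : s ∈ Set.Icc (t₀ - ((m:ℝ) + 1)) (t₀ + ((m:ℝ) + 1)) := Set.Ioo_subset_Icc_self hs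
    have hsNs : s ∈ Set.Icc (t₀ - ((N s : ℝ) + 1)) (t₀ + ((N s : ℝ) + 1)) := by
      have h1 : |s - t₀| ≤ (N s : ℝ) := Nat.le_ceil _
      have := abs_le.1 (h1.trans (by linarith [Nat.le_ceil (|s - t₀|)] : (N s : ℝ) ≤ (N s : ℝ) + 1))
      exact ⟨by linarith [this.1], by linarith [this.2]⟩
    rcases le_total (N s) m with h | h
    · exact hcons (N s) m h hsNs
    · exact (hcons m (N s) h hsm).symm
  have hd : HasDerivAt (Y m) (G t (Y m t)) t :=
    (hY m t (Set.Ioo_subset_Icc_self htIoo)).hasDerivAt (Icc_mem_nhds htIoo.1 htIoo.2)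
  have hev : (fun s => Y (N s) s) =ᶠ[nhds t] Y m :=
    Filter.eventuallyEq_of_mem (isOpen_Ioo.mem_nhds htIoo) hU
  have := hd.congr_of_eventuallyEq hev
  have hYt : Y (N t) t = Y m t := hU t htIoo
  rw [show G t (Y (N t) t) = G t (Y m t) by rw [hYt]]
  exact this


end ODEAux

open scoped NNReal


/-- Global existence and uniqueness for the second-order ODE
`x'' = F(t, x)` when `F` is continuous and Lipschitz in the second variable,
uniformly on compact time intervals. -/
theorem stmt_3 (n : ℕ) (F : ℝ × EuclideanSpace ℝ (Fin n) → EuclideanSpace ℝ (Fin n))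
    (hF : Continuous F)
    (hLip : ∀ a b : ℝ, ∃ L : ℝ, 0 < L ∧
      ∀ t ∈ Set.Icc a b, ∀ x y : EuclideanSpace ℝ (Fin n),
        ‖F (t, x) - F (t, y)‖ ≤ L * ‖x - y‖)
    (t₀ : ℝ) (x₀ x₁ : EuclideanSpace ℝ (Fin n)) :
    ∃! x : ℝ → EuclideanSpace ℝ (Fin n),
      ContDiff ℝ 2 x ∧ x t₀ = x₀ ∧ deriv x t₀ = x₁ ∧
        ∀ t : ℝ, deriv (deriv x) t = F (t, x t) := by
  set G : ℝ → (EuclideanSpace ℝ (Fin n)) × (EuclideanSpace ℝ (Fin n)) → (EuclideanSpace ℝ (Fin n)) × (EuclideanSpace ℝ (Fin n)) := fun t p => (p.2, F (t, p.1)) with hGdef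
  have hG : Continuous fun p : ℝ × ((EuclideanSpace ℝ (Fin n)) × (EuclideanSpace ℝ (Fin n))) => G p.1 p.2 := by
    apply Continuous.prodMk
    · exact continuous_snd.comp continuous_snd
    · exact hF.comp (continuous_fst.prodMk (continuous_fst.comp continuous_snd))
  have hL : ∀ a b : ℝ, ∃ K : ℝ≥0, ∀ t ∈ Set.Icc a b, LipschitzWith K (G t) := by
    intro a b
    obtain ⟨L, hL0, hLip'⟩ := hLip a b
    refine ⟨Real.toNNReal (max 1 L), fun t ht => ?_⟩
    apply LipschitzWith.of_dist_le_mul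
    intro p q
    rw [Real.coe_toNNReal _ (by positivity)]
    have h1 : dist (G t p) (G t q) = max (dist p.2 q.2) (dist (F (t, p.1)) (F (t, q.1))) :=
      Prod.dist_eq
    rw [h1]
    have hd1 : dist p.1 q.1 ≤ dist p q := by rw [Prod.dist_eq]; exact le_max_left _ _
    have hd2 : dist p.2 q.2 ≤ dist p q := by rw [Prod.dist_eq]; exact le_max_right _ _
    have hd0 : (0:ℝ) ≤ dist p q := dist_nonneg
    apply max_le
    · calc dist p.2 q.2 ≤ dist p q := hd2
        _ = 1 * dist p q := (one_mul _).symm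
        _ ≤ max 1 L * dist p q := by
            exact mul_le_mul_of_nonneg_right (le_max_left _ _) hd0
    · have := hLip' t ht p.1 q.1
      rw [← dist_eq_norm, ← dist_eq_norm] at this
      calc dist (F (t, p.1)) (F (t, q.1)) ≤ L * dist p.1 q.1 := this
        _ ≤ L * dist p q := mul_le_mul_of_nonneg_left hd1 hL0.le
        _ ≤ max 1 L * dist p q := mul_le_mul_of_nonneg_right (le_max_right _ _) hd0
  obtain ⟨y, hy0, hy⟩ := ode_global G hG hL t₀ (x₀, x₁)
  set x : ℝ → (EuclideanSpace ℝ (Fin n)) := fun t => (y t).1 with hx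
  have hx' : ∀ t, HasDerivAt x ((y t).2) t := by
    intro t
    have h := ((ContinuousLinearMap.fst ℝ (EuclideanSpace ℝ (Fin n)) (EuclideanSpace ℝ (Fin n))).hasFDerivAt).comp_hasDerivAt t (hy t)
    exact h
  have hv' : ∀ t, HasDerivAt (fun s => (y s).2) (F (t, x t)) t := by
    intro t
    have h := ((ContinuousLinearMap.snd ℝ (EuclideanSpace ℝ (Fin n)) (EuclideanSpace ℝ (Fin n))).hasFDerivAt).comp_hasDerivAt t (hy t)
    exact h
  have hderiv : deriv x = fun t => (y t).2 := funext fun t => (hx' t).deriv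
  have hderiv2 : ∀ t, deriv (deriv x) t = F (t, x t) := by
    intro t
    rw [hderiv]
    exact (hv' t).deriv
  have hxcont : Continuous x :=
    continuous_fst.comp (continuous_iff_continuousAt.2 fun t => (hy t).continuousAt)
  have hcd : ContDiff ℝ 2 x := by
    rw [show (2 : WithTop ℕ∞) = 1 + 1 by norm_num, contDiff_succ_iff_deriv]
    refine ⟨fun t => (hx' t).differentiableAt, by simp, ?_⟩
    rw [contDiff_one_iff_deriv]
    constructor
    · rw [hderiv]
      exact fun t => (hv' t).differentiableAt
    · have : deriv (deriv x) = fun t => F (t, x t) := funext hderiv2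
      rw [this]
      exact hF.comp (continuous_id.prodMk hxcont)
  have hx0 : x t₀ = x₀ := by rw [hx]; simp [hy0]
  have hx1 : deriv x t₀ = x₁ := by rw [hderiv]; simp [hy0]
  refine ⟨x, ⟨hcd, hx0, hx1, hderiv2⟩, ?_⟩
  rintro z ⟨hz2, hz0, hz1, hzode⟩
  have hzdiff : Differentiable ℝ z := hz2.differentiable (by norm_num)
  have hzd1 : ContDiff ℝ 1 (deriv z) := by
    rw [show (2 : WithTop ℕ∞) = 1 + 1 by norm_num, contDiff_succ_iff_deriv] at hz2
    exact hz2.2.2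
  have hzddiff : Differentiable ℝ (deriv z) := hzd1.differentiable one_ne_zero
  set w : ℝ → (EuclideanSpace ℝ (Fin n)) × (EuclideanSpace ℝ (Fin n)) := fun t => (z t, deriv z t) with hw
  have hwode : ∀ t, HasDerivAt w (G t (w t)) t := by
    intro t
    have h1 : HasDerivAt z (deriv z t) t := (hzdiff t).hasDerivAt
    have h2 : HasDerivAt (deriv z) (F (t, z t)) t := by
      have := (hzddiff t).hasDerivAt
      rwa [hzode t] at this
    exact h1.prodMk h2
  have hw0 : w t₀ = (x₀, x₁) := by rw [hw]; simp [hz0, hz1]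
  have hwy : w = y := ode_unique G hL hwode hy (by rw [hw0, hy0])
  funext t
  have : w t = y t := by rw [hwy]
  rw [hx]
  have := congrArg Prod.fst this
  simpa [hw] using this
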